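/- Exact feasibility characterization under "ellipsoidal ∩ polyhedral" uncertainty when the ellipsoid is contained in the polyhedron: let δ_E, δ_P > 0 with √n · δ_E ≤ δ_P. Then the set {ζ ∈ ℝⁿ : ‖ζ‖₂ ≤ δ_E and ‖ζ‖₁ ≤ δ_P} equals {ζ ∈ ℝⁿ : ‖ζ‖₂ ≤ δ_E}, and the robust feasibility condition "for all ζ with ‖ζ‖₂ ≤ δ_E and ‖ζ‖₁ ≤ δ_P, ((δ_E μ⁽⁰⁾ + Σ_{j=1}^n ζⱼ μ⁽ʲ⁾)ᵀ x)² ≥ τ² δ_E²" holds if and only if there exists λ ≥ 0 such that A − λ B⁽ᴱ⁾ is positive semidefinite. -/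

import Mathlib

open Matrix

noncomputable section

/-- `a j = (μ⁽ʲ⁾)ᵀ x`, the dot product of the `j`-th expected-return vector with `x`. -/
def avec (n : ℕ) (x : Fin n → ℝ) (μ : Fin (n + 1) → Fin n → ℝ) : Fin (n + 1) → ℝ :=
  fun j => μ j ⬝ᵥ x

/-- The symmetric matrix `A = a aᵀ - τ² e₀ e₀ᵀ`. -/
def Amat (n : ℕ) (x : Fin n → ℝ) (τ : ℝ) (μ : Fin (n + 1) → Fin n → ℝ) :
    Matrix (Fin (n + 1)) (Fin (n + 1)) ℝ :=
  Matrix.of fun i j =>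
    avec n x μ i * avec n x μ j - if i = 0 ∧ j = 0 then τ ^ 2 else 0

/-- The matrix `B⁽ᴱ⁾ = diag(1, -1, …, -1)`. -/
def BE (n : ℕ) : Matrix (Fin (n + 1)) (Fin (n + 1)) ℝ :=
  Matrix.diagonal fun i => if i = 0 then 1 else -1

/-- The matrix `B⁽ᴾ⁾ = e₀e₀ᵀ - J`: `(0,0)`-entry `1`, entries `-1` for `i, j ≥ 1`,
zero elsewhere. -/
def BP (n : ℕ) : Matrix (Fin (n + 1)) (Fin (n + 1)) ℝ :=
  Matrix.of fun i j =>
    if i = 0 ∧ j = 0 then 1 else if i ≠ 0 ∧ j ≠ 0 then -1 else 0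

/-- A real matrix is positive semidefinite: `zᵀ M z ≥ 0` for all `z`. -/
def IsPSD {d : ℕ} (M : Matrix (Fin d) (Fin d) ℝ) : Prop :=
  ∀ z : Fin d → ℝ, 0 ≤ z ⬝ᵥ M *ᵥ z

/-- Key scalar inequality underlying the PSD certificate. -/
lemma key_ineq (α σ tb t u S lam : ℝ) (hσ : 0 ≤ σ) (htb : 0 ≤ tb) (hS : 0 ≤ S)
    (hu : u ^ 2 ≤ σ ^ 2 * S) (hα : σ + tb ≤ α)
    (hlam : lam = (α ^ 2 - σ ^ 2 - tb ^ 2) / 2) :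
    (tb ^ 2 + lam) * t ^ 2 ≤ (α * t + u) ^ 2 + lam * S := by
  have hstb : σ * tb ≤ lam := by nlinarith [sq_nonneg (α - σ - tb)]
  have hl0 : 0 ≤ lam := le_trans (mul_nonneg hσ htb) hstb
  rcases eq_or_lt_of_le hσ with hσ0 | hσp
  · have hu0 : u = 0 := by
      have h : u ^ 2 = 0 :=
        le_antisymm (by nlinarith [sq_nonneg σ, hu, hσ0.symm ▸ hu]) (sq_nonneg u)
      exact pow_eq_zero_iff two_ne_zero |>.mp h
    subst hu0
    nlinarith [mul_nonneg hl0 hS, sq_nonneg t, sq_nonneg (α * t)]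
  · have hL : (0:ℝ) < σ ^ 2 * (σ ^ 2 + lam) := by positivity
    have key : σ ^ 2 * (σ ^ 2 + lam) * ((α * t + u) ^ 2 + lam * S - (tb ^ 2 + lam) * t ^ 2)
        = (σ ^ 2 * (α * t + u) + lam * u) ^ 2 + lam * (σ ^ 2 + lam) * (σ ^ 2 * S - u ^ 2)
          + (σ * t) ^ 2 * ((lam - σ * tb) * (lam + σ * tb)) := by
      rw [hlam]; ring
    have h1 : 0 ≤ lam * (σ ^ 2 + lam) * (σ ^ 2 * S - u ^ 2) :=
      mul_nonneg (mul_nonneg hl0 (by positivity)) (by linarith)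
    have h2 : 0 ≤ (σ * t) ^ 2 * ((lam - σ * tb) * (lam + σ * tb)) :=
      mul_nonneg (sq_nonneg _) (mul_nonneg (by linarith) (by nlinarith))
    nlinarith [sq_nonneg (σ ^ 2 * (α * t + u) + lam * u)]

/-- Abstract forward direction: from robust feasibility on the ℓ² ball to an
S-lemma certificate. -/
lemma forward_cert (n : ℕ) (a0 : ℝ) (b : Fin n → ℝ) (τ δE : ℝ) (hδE : 0 < δE)
    (H' : ∀ ζ : Fin n → ℝ, Real.sqrt (∑ j, ζ j ^ 2) ≤ δE →
      τ ^ 2 * δE ^ 2 ≤ (δE * a0 + ∑ j, ζ j * b j) ^ 2) :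
    ∃ lam : ℝ, 0 ≤ lam ∧ ∀ (t0 : ℝ) (w : Fin n → ℝ),
      0 ≤ (a0 * t0 + ∑ j, b j * w j) ^ 2 - τ ^ 2 * t0 ^ 2
          - lam * (t0 ^ 2 - ∑ j, w j ^ 2) := by
  by_cases hτ : τ = 0
  · refine ⟨0, le_refl 0, fun t0 w => ?_⟩
    rw [hτ]
    nlinarith [sq_nonneg (a0 * t0 + ∑ j, b j * w j)]
  have hsq_sum : ∀ c : ℝ, (∑ j, (c * b j) ^ 2) = c ^ 2 * ∑ j, b j ^ 2 := by
    intro c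
    rw [Finset.mul_sum]
    exact Finset.sum_congr rfl fun j _ => mul_pow c (b j) 2
  have hdot_sum : ∀ c : ℝ, (∑ j, (c * b j) * b j) = c * ∑ j, b j ^ 2 := by
    intro c
    rw [Finset.mul_sum]
    exact Finset.sum_congr rfl fun j _ => by ring
  obtain ⟨B2, hB2def⟩ : ∃ B2 : ℝ, B2 = ∑ j, b j ^ 2 := ⟨_, rfl⟩
  have hB2nn : (0:ℝ) ≤ B2 := hB2def ▸ by positivity
  obtain ⟨σ, hσdef⟩ : ∃ σ : ℝ, σ = Real.sqrt B2 := ⟨_, rfl⟩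
  have hσnn : 0 ≤ σ := hσdef ▸ Real.sqrt_nonneg _
  have hσ2 : σ ^ 2 = B2 := hσdef ▸ Real.sq_sqrt hB2nn
  have hδE2 : (0:ℝ) < δE ^ 2 := by positivity
  have hτ2 : (0:ℝ) < τ ^ 2 := by positivity
  -- step 2a : σ ≤ |a0|
  have h2a : σ ≤ |a0| := by
    by_contra hlt
    push_neg at hlt
    have hB2pos : 0 < B2 := by nlinarith [abs_nonneg a0, sq_abs a0]
    have hH := H' (fun j => (-(δE * a0 / B2)) * b j)
      (by
        rw [hsq_sum, ← hB2def]
        have hval : (-(δE * a0 / B2)) ^ 2 * B2 = δE ^ 2 * (a0 ^ 2 / B2) := by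
          field_simp
        rw [hval]
        have h1 : a0 ^ 2 / B2 ≤ 1 := by
          rw [div_le_one hB2pos]
          nlinarith [sq_abs a0, abs_nonneg a0]
        calc Real.sqrt (δE ^ 2 * (a0 ^ 2 / B2)) ≤ Real.sqrt (δE ^ 2 * 1) :=
              Real.sqrt_le_sqrt (by nlinarith)
          _ = δE := by rw [mul_one, Real.sqrt_sq hδE.le])
    rw [hdot_sum, ← hB2def] at hH
    have hz : δE * a0 + -(δE * a0 / B2) * B2 = 0 := by field_simp; ring
    rw [hz] at hH
    nlinarith
  -- step 2b : σ + |τ| ≤ |a0|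
  have h2b : σ + |τ| ≤ |a0| := by
    by_cases hB2 : B2 = 0
    · have hσ0 : σ = 0 := by rw [hσdef, hB2, Real.sqrt_zero]
      have h0 := H' (fun _ => 0) (by simp [hδE.le])
      simp only [zero_mul, Finset.sum_const_zero, add_zero] at h0
      have hττ : τ ^ 2 ≤ a0 ^ 2 := by nlinarith
      have habs : |τ| ≤ |a0| := by
        rw [← Real.sqrt_sq_eq_abs, ← Real.sqrt_sq_eq_abs]
        exact Real.sqrt_le_sqrt hττ
      linarith
    · have hB2pos : 0 < B2 := lt_of_le_of_ne hB2nn (Ne.symm hB2)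
      have hσpos : 0 < σ := hσdef ▸ Real.sqrt_pos.mpr hB2pos
      obtain ⟨s, hsdef⟩ : ∃ s : ℝ, s = if 0 ≤ a0 then 1 else -1 := ⟨_, rfl⟩
      have hs2 : s ^ 2 = 1 := by rw [hsdef]; split <;> norm_num
      have hsa : s * a0 = |a0| := by
        rw [hsdef]; split
        · rw [one_mul, abs_of_nonneg ‹_›]
        · rw [neg_one_mul, abs_of_neg (lt_of_not_ge ‹¬0 ≤ a0›)]
      have hH := H' (fun j => (-(δE * s / σ)) * b j)
        (by
          rw [hsq_sum, ← hB2def]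
          have hval : (-(δE * s / σ)) ^ 2 * B2 = δE ^ 2 := by
            rw [← hσ2]; field_simp; nlinarith [hs2]
          rw [hval, Real.sqrt_sq hδE.le])
      rw [hdot_sum, ← hB2def] at hH
      have hBσ : B2 = σ * σ := by rw [← hσ2]; ring
      have he : δE * a0 + -(δE * s / σ) * B2 = δE * s * (|a0| - σ) := by
        rw [hBσ, ← hsa]
        have hc : -(δE * s / σ) * (σ * σ) = -(δE * s * σ) := by
          field_simp
        rw [hc]
        linear_combination (-(δE * a0)) * hs2
      rw [he] at hH
      have hsq2 : τ ^ 2 ≤ (|a0| - σ) ^ 2 := by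
        have hexp : (δE * s * (|a0| - σ)) ^ 2 = δE ^ 2 * (|a0| - σ) ^ 2 := by
          rw [mul_pow, mul_pow, hs2, mul_one]
        rw [hexp] at hH
        nlinarith
      have habs : |τ| ≤ |a0| - σ := by
        have h1 : |τ| = Real.sqrt (τ ^ 2) := (Real.sqrt_sq_eq_abs τ).symm
        have h2 : Real.sqrt ((|a0| - σ) ^ 2) = |a0| - σ := Real.sqrt_sq (by linarith)
        rw [h1, ← h2]
        exact Real.sqrt_le_sqrt hsq2
      linarith
  -- certificate
  refine ⟨(a0 ^ 2 - B2 - τ ^ 2) / 2, ?_, ?_⟩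
  · have hsq' : (σ + |τ|) ^ 2 ≤ |a0| ^ 2 :=
      pow_le_pow_left₀ (by positivity) h2b 2
    nlinarith [sq_abs a0, sq_abs τ, mul_nonneg hσnn (abs_nonneg τ)]
  · intro t0 w
    have hCS : (∑ j, b j * w j) ^ 2 ≤ B2 * ∑ j, w j ^ 2 :=
      hB2def ▸ Finset.sum_mul_sq_le_sq_mul_sq Finset.univ b w
    have hSnn : (0:ℝ) ≤ ∑ j, w j ^ 2 := by positivity
    have key := key_ineq |a0| σ |τ| (if 0 ≤ a0 then t0 else -t0) (∑ j, b j * w j)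
      (∑ j, w j ^ 2) ((a0 ^ 2 - B2 - τ ^ 2) / 2) hσnn (abs_nonneg τ) hSnn
      (by rw [hσ2]; exact hCS) h2b (by rw [sq_abs, sq_abs, hσ2])
    have ht2 : (if 0 ≤ a0 then t0 else -t0) ^ 2 = t0 ^ 2 := by split <;> ring
    have hta : |a0| * (if 0 ≤ a0 then t0 else -t0) = a0 * t0 := by
      split
      · rw [abs_of_nonneg ‹_›]
      · rw [abs_of_neg (lt_of_not_ge ‹¬0 ≤ a0›)]; ring
    rw [ht2, hta, sq_abs] at key
    linarith

/-- Abstract backward direction. -/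
lemma backward_cert (n : ℕ) (a0 : ℝ) (b : Fin n → ℝ) (τ δE lam : ℝ)
    (hlam : 0 ≤ lam)
    (hpsd : ∀ (t0 : ℝ) (w : Fin n → ℝ),
      0 ≤ (a0 * t0 + ∑ j, b j * w j) ^ 2 - τ ^ 2 * t0 ^ 2
          - lam * (t0 ^ 2 - ∑ j, w j ^ 2))
    (ζ : Fin n → ℝ) (h1 : (∑ j, ζ j ^ 2) ≤ δE ^ 2) :
    τ ^ 2 * δE ^ 2 ≤ (δE * a0 + ∑ j, ζ j * b j) ^ 2 := by
  have h := hpsd δE ζ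
  have he : (∑ j, b j * ζ j) = ∑ j, ζ j * b j :=
    Finset.sum_congr rfl fun j _ => mul_comm _ _
  rw [he] at h
  have he2 : a0 * δE = δE * a0 := mul_comm _ _
  rw [he2] at h
  nlinarith [mul_nonneg hlam (sub_nonneg.mpr h1)]

/-- Expansion of the quadratic form of `A - lam • Bᴱ`. -/
lemma quad_eq (n : ℕ) (x : Fin n → ℝ) (τ : ℝ) (μ : Fin (n + 1) → Fin n → ℝ)
    (lam : ℝ) (z : Fin (n + 1) → ℝ) :
    z ⬝ᵥ (Amat n x τ μ - lam • BE n) *ᵥ z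
      = (∑ i, avec n x μ i * z i) ^ 2 - τ ^ 2 * z 0 ^ 2
        - lam * (z 0 ^ 2 - ∑ j : Fin n, z j.succ ^ 2) := by
  set a : Fin (n+1) → ℝ := avec n x μ with ha
  have hA : z ⬝ᵥ (Amat n x τ μ) *ᵥ z = (∑ i, a i * z i) ^ 2 - τ ^ 2 * z 0 ^ 2 := by
    simp only [dotProduct, mulVec, Amat, Matrix.of_apply, sub_mul, mul_sub,
      Finset.sum_sub_distrib, ← ha]
    congr 1
    · have e : ∀ i, z i * ∑ j, a i * a j * z j = (a i * z i) * ∑ j, a j * z j := by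
        intro i
        rw [Finset.mul_sum, Finset.mul_sum]
        exact Finset.sum_congr rfl fun j _ => by ring
      simp_rw [e, ← Finset.sum_mul, sq]
    · have e : ∀ i : Fin (n+1), z i * ∑ j, (if i = 0 ∧ j = 0 then τ ^ 2 else 0) * z j
          = if i = 0 then τ ^ 2 * z 0 * z i else 0 := by
        intro i
        by_cases hi : i = 0 <;> simp [hi, Finset.mul_sum] <;> ring
      simp_rw [e]
      rw [Finset.sum_ite_eq' Finset.univ (0 : Fin (n+1)) (fun i => τ ^ 2 * z 0 * z i)]
      simp [sq]; ring
  have hB : z ⬝ᵥ (lam • BE n) *ᵥ z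
      = lam * (z 0 ^ 2 - ∑ j : Fin n, z j.succ ^ 2) := by
    rw [smul_mulVec, dotProduct_smul]
    have : z ⬝ᵥ (BE n) *ᵥ z = z 0 ^ 2 - ∑ j : Fin n, z j.succ ^ 2 := by
      simp only [dotProduct, BE, mulVec_diagonal]
      rw [Fin.sum_univ_succ]
      simp only [Fin.succ_ne_zero, if_neg, if_pos, Fin.isValue, ite_true, ite_false,
        neg_mul, one_mul, mul_neg]
      rw [Finset.sum_neg_distrib]
      have : ∀ j : Fin n, z j.succ * z j.succ = z j.succ ^ 2 := fun j => (sq _).symm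
      simp_rw [this]
      ring
    rw [this]; simp [smul_eq_mul]
  rw [sub_mulVec, dotProduct_sub, hA, hB]

/-- The affine return expression in terms of the `avec` coordinates. -/
lemma dot_eq (n : ℕ) (x : Fin n → ℝ) (μ : Fin (n + 1) → Fin n → ℝ) (δE : ℝ) (ζ : Fin n → ℝ) :
    (δE • μ 0 + ∑ j : Fin n, ζ j • μ j.succ) ⬝ᵥ x
      = δE * avec n x μ 0 + ∑ j, ζ j * avec n x μ j.succ := by
  simp only [avec, dotProduct, Pi.add_apply, Pi.smul_apply, Finset.sum_apply,
    smul_eq_mul, add_mul, Finset.sum_mul, Finset.sum_add_distrib, Finset.mul_sum]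
  congr 1
  · exact Finset.sum_congr rfl fun i _ => by ring
  · rw [Finset.sum_comm]
    exact Finset.sum_congr rfl fun j _ => Finset.sum_congr rfl fun i _ => by ring

/-- Exact feasibility characterization under "ellipsoidal ∩ polyhedral" uncertainty when
the ellipsoid is contained in the polyhedron (`√n · δ_E ≤ δ_P`): the intersection equals
the ellipsoid, and the robust feasibility condition on the intersection holds iff there is
`λ ≥ 0` with `A - λ B⁽ᴱ⁾` positive semidefinite. -/
theorem feasibility_ellipsoid_polyhedral_exact (n : ℕ) (hn : 1 ≤ n) (x : Fin n → ℝ)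
    (τ : ℝ) (μ : Fin (n + 1) → Fin n → ℝ) (δE δP : ℝ) (hδE : 0 < δE) (hδP : 0 < δP)
    (hle : Real.sqrt n * δE ≤ δP) :
    ({ζ : Fin n → ℝ | Real.sqrt (∑ j, ζ j ^ 2) ≤ δE ∧ (∑ j, |ζ j|) ≤ δP} =
      {ζ : Fin n → ℝ | Real.sqrt (∑ j, ζ j ^ 2) ≤ δE}) ∧
    ((∀ ζ : Fin n → ℝ, Real.sqrt (∑ j, ζ j ^ 2) ≤ δE → (∑ j, |ζ j|) ≤ δP →
        τ ^ 2 * δE ^ 2 ≤ ((δE • μ 0 + ∑ j : Fin n, ζ j • μ j.succ) ⬝ᵥ x) ^ 2) ↔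
      ∃ lam : ℝ, 0 ≤ lam ∧ IsPSD (Amat n x τ μ - lam • BE n)) := by
  have hsq : ∀ ζ : Fin n → ℝ, Real.sqrt (∑ j, ζ j ^ 2) ≤ δE → (∑ j, ζ j ^ 2) ≤ δE ^ 2 := by
    intro ζ h
    calc (∑ j, ζ j ^ 2) = (Real.sqrt (∑ j, ζ j ^ 2)) ^ 2 :=
          (Real.sq_sqrt (by positivity)).symm
      _ ≤ δE ^ 2 := pow_le_pow_left₀ (Real.sqrt_nonneg _) h 2
  have hl1 : ∀ ζ : Fin n → ℝ, Real.sqrt (∑ j, ζ j ^ 2) ≤ δE → (∑ j, |ζ j|) ≤ δP := by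
    intro ζ h
    have hcs : (∑ j, |ζ j|) ^ 2 ≤ (n : ℝ) * (∑ j, ζ j ^ 2) := by
      have := Finset.sum_mul_sq_le_sq_mul_sq Finset.univ (fun _ => (1:ℝ)) (fun j => |ζ j|)
      simpa [sq_abs] using this
    calc (∑ j, |ζ j|) = Real.sqrt ((∑ j, |ζ j|) ^ 2) :=
          (Real.sqrt_sq (by positivity)).symm
      _ ≤ Real.sqrt ((n : ℝ) * δE ^ 2) := by
          apply Real.sqrt_le_sqrt
          have h2 := hsq ζ h
          nlinarith [Nat.cast_nonneg (α := ℝ) n]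
      _ = Real.sqrt n * δE := by
          rw [Real.sqrt_mul (Nat.cast_nonneg n), Real.sqrt_sq hδE.le]
      _ ≤ δP := hle
  refine ⟨?_, ?_, ?_⟩
  · ext ζ
    simp only [Set.mem_setOf_eq]
    exact ⟨fun h => h.1, fun h => ⟨h, hl1 ζ h⟩⟩
  · -- forward
    intro H
    have H' : ∀ ζ : Fin n → ℝ, Real.sqrt (∑ j, ζ j ^ 2) ≤ δE →
        τ ^ 2 * δE ^ 2 ≤ (δE * avec n x μ 0 + ∑ j, ζ j * avec n x μ j.succ) ^ 2 := by
      intro ζ h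
      have := H ζ h (hl1 ζ h)
      rwa [dot_eq] at this
    obtain ⟨lam, hlam, hcert⟩ :=
      forward_cert n (avec n x μ 0) (fun j => avec n x μ j.succ) τ δE hδE H'
    refine ⟨lam, hlam, fun z => ?_⟩
    rw [quad_eq]
    have hsum : (∑ i, avec n x μ i * z i)
        = avec n x μ 0 * z 0 + ∑ j : Fin n, avec n x μ j.succ * z j.succ :=
      Fin.sum_univ_succ _
    rw [hsum]
    exact hcert (z 0) (fun j => z j.succ)
  · -- backward
    rintro ⟨lam, hlam, hpsd⟩ ζ h1 _h2
    rw [dot_eq]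
    refine backward_cert n (avec n x μ 0) (fun j => avec n x μ j.succ) τ δE lam hlam
      (fun t0 w => ?_) ζ (hsq ζ h1)
    have h := hpsd (Fin.cons t0 w : ∀ _ : Fin (n + 1), ℝ)
    rw [quad_eq] at h
    have hsum : (∑ i, avec n x μ i * (Fin.cons t0 w : ∀ _ : Fin (n + 1), ℝ) i)
        = avec n x μ 0 * t0 + ∑ j : Fin n, avec n x μ j.succ * w j := by
      rw [Fin.sum_univ_succ]
      simp [Fin.cons_zero, Fin.cons_succ]
    have hz0 : (Fin.cons t0 w : ∀ _ : Fin (n + 1), ℝ) 0 = t0 := rfl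
    have hzs : ∀ j : Fin n, (Fin.cons t0 w : ∀ _ : Fin (n + 1), ℝ) j.succ = w j :=
      fun j => Fin.cons_succ (α := fun _ : Fin (n + 1) => ℝ) t0 w j
    rw [hsum, hz0] at h
    simp_rw [hzs] at h
    exact h
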